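/- Let G be a locally finite group and φ ∈ Aut(G) such that every g ∈ G satisfies φⁿ(g) = g for some n ≥ 1. Then G ⋊_φ ℤ is locally virtually cyclic: every finitely generated subgroup of G ⋊_φ ℤ is virtually cyclic. -/

import Mathlib

def VirtuallyCyclic (G : Type*) [Group G] : Prop :=
  ∃ C : Subgroup G, IsCyclic C ∧ C.FiniteIndex

lemma aux_isCyclic_zpowers {A : Type*} [Group A] (g : A) :
    IsCyclic (Subgroup.zpowers g) := by
  refine ⟨⟨⟨g, Subgroup.mem_zpowers g⟩, fun x => ?_⟩⟩
  obtain ⟨k, hk⟩ := x.2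
  exact ⟨k, Subtype.ext (by simpa using hk)⟩

lemma aux_vc_equiv {A B : Type*} [Group A] [Group B] (e : A ≃* B)
    (h : VirtuallyCyclic A) : VirtuallyCyclic B := by
  obtain ⟨C, hC, hCi⟩ := h
  refine ⟨C.map e.toMonoidHom, ?_, ?_⟩
  · haveI := hC
    exact isCyclic_of_surjective (C.equivMapOfInjective e.toMonoidHom e.injective)
      (MulEquiv.surjective _)
  · refine ⟨?_⟩
    rw [Subgroup.index_map_eq _ e.surjective (fun x hx => by
      have : x = 1 := e.injective (by simpa using hx)
      rw [this]; exact C.one_mem)]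
    exact hCi.1

lemma aux_vc_subgroup {A : Type*} [Group A] (h : VirtuallyCyclic A) (K : Subgroup A) :
    VirtuallyCyclic K := by
  obtain ⟨C, hC, hCi⟩ := h
  haveI := hC
  refine ⟨C.subgroupOf K, ?_, inferInstance⟩
  -- an injective hom from `C.subgroupOf K` into the cyclic group `C`
  let f : (C.subgroupOf K) →* C :=
    { toFun := fun x => ⟨(x.1 : A), x.2⟩
      map_one' := rfl
      map_mul' := fun _ _ => rfl }
  have hf : Function.Injective f := by
    intro x y hxy
    have h2 := congrArg Subtype.val hxy
    exact Subtype.ext (Subtype.ext h2)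
  exact isCyclic_of_surjective (MonoidHom.ofInjective hf).symm (MulEquiv.surjective _)

lemma aux_fix_pow {G : Type*} [Group G] (ψ : MulAut G) (g : G) (h : ψ g = g) :
    ∀ k : ℕ, (ψ ^ k) g = g := by
  intro k
  induction k with
  | zero => rfl
  | succ k ih => rw [pow_succ, MulAut.mul_apply, h, ih]

lemma aux_fix_zpow {G : Type*} [Group G] (ψ : MulAut G) (g : G) (h : ψ g = g) :
    ∀ k : ℤ, (ψ ^ k) g = g := by
  intro k
  have hs : ψ ∈ MulAction.stabilizer (MulAut G) g := h
  exact Subgroup.zpow_mem _ hs k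

theorem stmt14 {G : Type*} [Group G]
    (hLF : ∀ K : Subgroup G, K.FG → Finite K) (φ : MulAut G)
    (hlb : ∀ g : G, ∃ n : ℕ, 1 ≤ n ∧ (φ ^ n) g = g) :
    ∀ K : Subgroup (G ⋊[zpowersHom (MulAut G) φ] Multiplicative ℤ),
      K.FG → VirtuallyCyclic K := by
  classical
  intro K hK
  obtain ⟨S, hS⟩ := hK
  choose n hn1 hn2 using hlb
  -- the common exponent for the generators
  set m : ℕ := ∏ s ∈ S, n s.left with hm
  have hm1 : 1 ≤ m := Finset.one_le_prod' (fun s _ => hn1 _)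
  have hfixS : ∀ s ∈ S, (φ ^ m) s.left = s.left := by
    intro s hs
    obtain ⟨c, hc⟩ := Finset.dvd_prod_of_mem (fun s => n s.left) hs
    rw [hm, hc, pow_mul]
    exact aux_fix_pow _ _ (hn2 s.left) c
  -- finite φ-invariant subgroup H containing all the left parts of generators
  set T : Finset G := (S ×ˢ Finset.range m).image (fun p => (φ ^ p.2) p.1.left) with hT
  set H : Subgroup G := Subgroup.closure ↑T with hHdef
  haveI hHfin : Finite H := hLF H ⟨T, rfl⟩
  have hmemT : ∀ s ∈ S, ∀ j < m, (φ ^ j) s.left ∈ H := by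
    intro s hs j hj
    exact Subgroup.subset_closure (Finset.mem_coe.2
      (Finset.mem_image.2 ⟨(s, j), Finset.mem_product.2 ⟨hs, Finset.mem_range.2 hj⟩, rfl⟩))
  have hfixH : ∀ h ∈ H, (φ ^ m) h = h := by
    intro h hh
    induction hh using Subgroup.closure_induction with
    | mem x hx =>
      obtain ⟨p, hp, rfl⟩ := Finset.mem_image.1 (Finset.mem_coe.1 hx)
      have := hfixS p.1 (Finset.mem_product.1 hp).1
      calc (φ ^ m) ((φ ^ p.2) p.1.left) = (φ ^ p.2) ((φ ^ m) p.1.left) := by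
            rw [← MulAut.mul_apply, ← MulAut.mul_apply, ← pow_add, ← pow_add, add_comm]
        _ = (φ ^ p.2) p.1.left := by rw [this]
    | one => simp
    | mul x y _ _ hx hy => rw [map_mul, hx, hy]
    | inv x _ hx => rw [map_inv, hx]
  have hmapH : ∀ h ∈ H, φ h ∈ H := by
    intro h hh
    induction hh using Subgroup.closure_induction with
    | mem x hx =>
      obtain ⟨p, hp, rfl⟩ := Finset.mem_image.1 (Finset.mem_coe.1 hx)
      obtain ⟨hpS, hpm⟩ := Finset.mem_product.1 hp
      have hj : p.2 < m := Finset.mem_range.1 hpm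
      have : φ ((φ ^ p.2) p.1.left) = (φ ^ (p.2 + 1)) p.1.left := by
        rw [pow_succ', MulAut.mul_apply]
      rw [this]
      rcases Nat.lt_or_ge (p.2 + 1) m with h1 | h1
      · exact hmemT p.1 hpS _ h1
      · have h2 : p.2 + 1 = m := by omega
        rw [h2, hfixS p.1 hpS]
        simpa using hmemT p.1 hpS 0 hm1
    | one => simpa using H.one_mem
    | mul x y _ _ hx hy => rw [map_mul]; exact H.mul_mem hx hy
    | inv x _ hx => rw [map_inv]; exact H.inv_mem hx
  have hnatH : ∀ (k : ℕ), ∀ h ∈ H, (φ ^ k) h ∈ H := by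
    intro k
    induction k with
    | zero => intro h hh; simpa using hh
    | succ k ih =>
      intro h hh
      rw [pow_succ', MulAut.mul_apply]
      exact hmapH _ (ih h hh)
  have hzH : ∀ (z : ℤ), ∀ h ∈ H, (φ ^ z) h ∈ H := by
    intro z h hh
    have hz0 : (0:ℤ) < (m:ℤ) := by exact_mod_cast hm1
    have hsplit : (φ ^ z) h = (φ ^ (z % (m:ℤ))) ((φ ^ ((m:ℤ) * (z / (m:ℤ)))) h) := by
      rw [← MulAut.mul_apply, ← zpow_add, Int.emod_add_mul_ediv z (m:ℤ)]
    have hfix2 : (φ ^ ((m:ℤ) * (z / (m:ℤ)))) h = h := by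
      rw [zpow_mul]
      have : (φ ^ (m:ℤ)) h = h := by rw [zpow_natCast]; exact hfixH h hh
      exact aux_fix_zpow _ _ this _
    rw [hsplit, hfix2]
    have hr0 : 0 ≤ z % (m:ℤ) := Int.emod_nonneg z (by omega)
    rw [show z % (m:ℤ) = ((z % (m:ℤ)).toNat : ℤ) from (Int.toNat_of_nonneg hr0).symm,
      zpow_natCast]
    exact hnatH _ h hh
  -- the subgroup H ⋊ ℤ
  set L : Subgroup (G ⋊[zpowersHom (MulAut G) φ] Multiplicative ℤ) :=
    { carrier := {x | x.left ∈ H}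
      one_mem' := H.one_mem
      mul_mem' := by
        intro a b ha hb
        show (a * b).left ∈ H
        have : (a * b).left = a.left * (φ ^ (Multiplicative.toAdd a.right)) b.left := rfl
        rw [this]
        exact H.mul_mem ha (hzH _ _ hb)
      inv_mem' := by
        intro a ha
        show (a⁻¹).left ∈ H
        have : (a⁻¹).left = (φ ^ (Multiplicative.toAdd a.right⁻¹)) a.left⁻¹ := rfl
        rw [this]
        exact hzH _ _ (H.inv_mem ha) } with hLdef
  have hKL : K ≤ L := by
    rw [← hS, Subgroup.closure_le]
    intro s hs
    have : s.left ∈ H := by simpa using hmemT s hs 0 hm1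
    exact this
  -- L is virtually cyclic
  have hLvc : VirtuallyCyclic L := by
    set c : G ⋊[zpowersHom (MulAut G) φ] Multiplicative ℤ :=
      SemidirectProduct.inr (Multiplicative.ofAdd (m:ℤ)) with hcdef
    have hc : c ∈ L := by
      show c.left ∈ H
      rw [hcdef, SemidirectProduct.left_inr]
      exact H.one_mem
    set cL : L := ⟨c, hc⟩ with hcL
    refine ⟨Subgroup.zpowers cL, aux_isCyclic_zpowers cL, ?_⟩
    have hsurj : ∃ f : (H × Fin m) → (L ⧸ Subgroup.zpowers cL), Function.Surjective f := by
      refine ⟨fun p => QuotientGroup.mk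
        ⟨⟨(p.1 : G), Multiplicative.ofAdd ((p.2 : ℕ) : ℤ)⟩, p.1.2⟩, ?_⟩
      intro q
      obtain ⟨x, rfl⟩ := QuotientGroup.mk_surjective q
      set z : ℤ := Multiplicative.toAdd (x : G ⋊[zpowersHom (MulAut G) φ] Multiplicative ℤ).right
        with hz
      have hmz : (0:ℤ) < (m:ℤ) := by exact_mod_cast hm1
      have hr0 : 0 ≤ z % (m:ℤ) := Int.emod_nonneg z (by omega)
      have hrlt : z % (m:ℤ) < (m:ℤ) := Int.emod_lt_of_pos z hmz
      have hrn : (z % (m:ℤ)).toNat < m := by omega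
      refine ⟨(⟨(x : G ⋊[zpowersHom (MulAut G) φ] Multiplicative ℤ).left, x.2⟩, ⟨(z % (m:ℤ)).toNat, hrn⟩), ?_⟩
      apply (QuotientGroup.eq).2
      rw [Subgroup.mem_zpowers_iff]
      refine ⟨z / (m:ℤ), ?_⟩
      apply Subtype.ext
      rw [Subgroup.coe_mul, Subgroup.coe_inv]
      rw [show ((cL ^ (z / (m:ℤ)) : L) : G ⋊[zpowersHom (MulAut G) φ] Multiplicative ℤ)
        = c ^ (z / (m:ℤ)) from SubgroupClass.coe_zpow _ _]
      rw [eq_inv_mul_iff_mul_eq]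
      have hck : c ^ (z / (m:ℤ)) =
          SemidirectProduct.inr (Multiplicative.ofAdd ((z / (m:ℤ)) * (m:ℤ))) := by
        rw [hcdef, ← map_zpow, ← ofAdd_zsmul, smul_eq_mul, mul_comm]
      rw [hck]
      ext
      · show _ * (φ ^ _) (1:G) = _
        simp
      · show Multiplicative.ofAdd ((z % (m:ℤ)).toNat : ℤ) * Multiplicative.ofAdd ((z / (m:ℤ)) * (m:ℤ)) = _
        rw [← ofAdd_add]
        rw [Int.toNat_of_nonneg hr0]
        have : z % (m:ℤ) + (z / (m:ℤ)) * (m:ℤ) = z := by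
          have := Int.emod_add_mul_ediv z (m:ℤ)
          linarith [this]
        rw [this, hz, ofAdd_toAdd]; rfl
    obtain ⟨f, hf⟩ := hsurj
    haveI : Finite (L ⧸ Subgroup.zpowers cL) := Finite.of_surjective f hf
    exact Subgroup.finiteIndex_of_finite_quotient
  have := aux_vc_subgroup hLvc (K.subgroupOf L)
  exact aux_vc_equiv (Subgroup.subgroupOfEquivOfLe hKL) this
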